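/- Let γ be continuous, increasing, and concave near the origin with γ(0)=0, and suppose ind_*(γ) > 0. Then for every ε ∈ (0,1) there exist c_ε > 0 and x_ε ∈ (0,1/2] such that ∫_0^{1/2} γ(xy)/(y√(log(1/y))) dy ≤ c_ε (γ(x))^{1−ε} for all x ∈ (0, x_ε]. -/

import Mathlib

open Filter Topology Set MeasureTheory intervalIntegral

/-- If `γ` is continuous, increasing, concave near the origin with `γ(0)=0` and positive lower
index (`γ(x) = o(x^α)` for some `α > 0`), then `γ` satisfies condition (C_{0+}). -/
theorem stmt7 (γ : ℝ → ℝ) (a : ℝ) (ha : 0 < a) (ha1 : a ≤ 1)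
    (hcont : ContinuousOn γ (Set.Icc (0:ℝ) a))
    (hmono : MonotoneOn γ (Set.Icc (0:ℝ) a))
    (hconc : ConcaveOn ℝ (Set.Icc (0:ℝ) a) γ)
    (hγ0 : γ 0 = 0)
    (hind : ∃ α > (0:ℝ),
      Tendsto (fun x : ℝ => γ x / x ^ α) (𝓝[>] (0:ℝ)) (𝓝 0)) :
    ∀ ε ∈ Set.Ioo (0:ℝ) 1, ∃ cε > (0:ℝ), ∃ xε ∈ Set.Ioc (0:ℝ) (1/2 : ℝ),
      ∀ x ∈ Set.Ioc (0:ℝ) xε,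
        (∫ y in (0:ℝ)..(1/2), γ (x * y) / (y * Real.sqrt (Real.log (1/y))))
          ≤ cε * (γ x) ^ (1 - ε) := by
  obtain ⟨α, hα, htend⟩ := hind
  intro ε hε
  obtain ⟨hε0, hε1⟩ := hε
  have hεne : ε ≠ 0 := ne_of_gt hε0
  -- log 2 facts
  have hlog2 : (0:ℝ) < Real.log 2 := Real.log_pos one_lt_two
  have hsq2 : (0:ℝ) < Real.sqrt (Real.log 2) := Real.sqrt_pos.mpr hlog2
  -- Step 1: γ t ≤ t ^ α for small t
  have h1 : ∀ᶠ t in 𝓝[>] (0:ℝ), γ t / t ^ α ≤ 1 :=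
    htend.eventually (eventually_le_nhds one_pos)
  obtain ⟨x₁, hx₁pos, hx₁⟩ : ∃ x₁ > (0:ℝ), ∀ t ∈ Set.Ioc (0:ℝ) x₁, γ t ≤ t ^ α := by
    rw [eventually_iff, mem_nhdsGT_iff_exists_Ioc_subset] at h1
    obtain ⟨u, hu, hsub⟩ := h1
    refine ⟨u, hu, fun t ht => ?_⟩
    have h2 := hsub ht
    have htpos : (0:ℝ) < t ^ α := Real.rpow_pos_of_pos ht.1 _
    exact (div_le_one htpos).mp h2
  -- Step 2: eventual polynomial-exponential bound
  have hlo : ∀ᶠ u in atTop, ‖u ^ ((1 - ε)/ε)‖ ≤ 1 * ‖Real.exp (α * u)‖ :=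
    (isLittleO_rpow_exp_pos_mul_atTop ((1 - ε)/ε) hα).bound one_pos
  obtain ⟨u₀, hu₀⟩ := eventually_atTop.mp hlo
  set u₁ : ℝ := max u₀ 1 with hu₁def
  have hu₁pos : (0:ℝ) < u₁ := lt_of_lt_of_le one_pos (le_max_right _ _)
  have hexp : ∀ u : ℝ, u₁ ≤ u → u ^ ((1 - ε)/ε) ≤ Real.exp (α * u) := by
    intro u hu
    have h2 := hu₀ u (le_trans (le_max_left _ _) hu)
    calc u ^ ((1 - ε)/ε) ≤ |u ^ ((1 - ε)/ε)| := le_abs_self _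
      _ = ‖u ^ ((1 - ε)/ε)‖ := (Real.norm_eq_abs _).symm
      _ ≤ 1 * ‖Real.exp (α * u)‖ := h2
      _ = Real.exp (α * u) := by
          rw [one_mul, Real.norm_eq_abs, abs_of_pos (Real.exp_pos _)]
  -- threshold t₀ for γ x
  set t₀ : ℝ := min (u₁ ^ (-(1/ε))) ((Real.log 2) ^ (-(1/ε))) with ht₀def
  have ht₀pos : (0:ℝ) < t₀ :=
    lt_min (Real.rpow_pos_of_pos hu₁pos _) (Real.rpow_pos_of_pos hlog2 _)
  have hkeyt : ∀ t : ℝ, 0 < t → t ≤ t₀ → u₁ ≤ t ^ (-ε) ∧ Real.log 2 ≤ t ^ (-ε) := by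
    intro t ht htle
    have hmain : ∀ c : ℝ, 0 < c → t ≤ c ^ (-(1/ε)) → c ≤ t ^ (-ε) := by
      intro c hc hle
      have h2 : (c ^ (-(1/ε))) ^ (-ε) ≤ t ^ (-ε) :=
        Real.rpow_le_rpow_of_nonpos ht hle (by linarith)
      calc c = c ^ ((-(1/ε)) * (-ε)) := by
              rw [show (-(1/ε)) * (-ε) = 1 by field_simp, Real.rpow_one]
        _ = (c ^ (-(1/ε))) ^ (-ε) := Real.rpow_mul hc.le _ _
        _ ≤ t ^ (-ε) := h2
    exact ⟨hmain u₁ hu₁pos (htle.trans (min_le_left _ _)),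
      hmain (Real.log 2) hlog2 (htle.trans (min_le_right _ _))⟩
  -- the constant and threshold
  refine ⟨(Real.sqrt (Real.log 2))⁻¹ * (α⁻¹ + 1), by positivity,
    min (1/2) (min a (min x₁ (t₀ ^ (1/α)))), ⟨by positivity, min_le_left _ _⟩, ?_⟩
  intro x hx
  obtain ⟨hx0, hxle⟩ := hx
  have hxhalf : x ≤ 1/2 := hxle.trans (min_le_left _ _)
  have hxa : x ≤ a := hxle.trans ((min_le_right _ _).trans (min_le_left _ _))
  have hxx₁ : x ≤ x₁ :=
    hxle.trans ((min_le_right _ _).trans ((min_le_right _ _).trans (min_le_left _ _)))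
  have hxt : x ≤ t₀ ^ (1/α) :=
    hxle.trans ((min_le_right _ _).trans ((min_le_right _ _).trans (min_le_right _ _)))
  have h0mem : (0:ℝ) ∈ Set.Icc (0:ℝ) a := ⟨le_rfl, ha.le⟩
  have hxmem : x ∈ Set.Icc (0:ℝ) a := ⟨hx0.le, hxa⟩
  have hγx_nonneg : 0 ≤ γ x := by
    have := hmono h0mem hxmem hx0.le
    linarith [hγ0, this]
  have hrpow_nonneg : 0 ≤ γ x ^ (1 - ε) := Real.rpow_nonneg hγx_nonneg _
  -- γ (x*y) ≤ γ x for y ∈ [0, 1/2]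
  have hγxy_le : ∀ y : ℝ, 0 ≤ y → y ≤ 1 → γ (x * y) ≤ γ x := by
    intro y hy0 hy1
    have hxy : x * y ≤ x := mul_le_of_le_one_right hx0.le hy1
    exact hmono ⟨mul_nonneg hx0.le hy0, hxy.trans hxa⟩ hxmem hxy
  have hγxy_nonneg : ∀ y : ℝ, 0 ≤ y → y ≤ 1 → 0 ≤ γ (x * y) := by
    intro y hy0 hy1
    have hxy : x * y ≤ x := mul_le_of_le_one_right hx0.le hy1
    have := hmono h0mem ⟨mul_nonneg hx0.le hy0, hxy.trans hxa⟩ (mul_nonneg hx0.le hy0)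
    linarith [hγ0, this]
  -- γ x ≤ t₀
  have hγx_le_t₀ : γ x ≤ t₀ := by
    calc γ x ≤ x ^ α := hx₁ x ⟨hx0, hxx₁⟩
      _ ≤ (t₀ ^ (1/α)) ^ α := Real.rpow_le_rpow hx0.le hxt hα.le
      _ = t₀ := by
          rw [← Real.rpow_mul ht₀pos.le, one_div, inv_mul_cancel₀ (ne_of_gt hα),
            Real.rpow_one]
  -- log (1/y) ≥ log 2 for 0 < y ≤ 1/2
  have hlogkey : ∀ y : ℝ, 0 < y → y ≤ 1/2 → Real.log 2 ≤ Real.log (1/y) := by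
    intro y hy0 hy2
    apply Real.log_le_log two_pos
    rw [le_div_iff₀ hy0]
    linarith
  rcases eq_or_lt_of_le hγx_nonneg with hzero | hγx_pos
  · -- degenerate case γ x = 0
    have hfz : Set.EqOn (fun y => γ (x * y) / (y * Real.sqrt (Real.log (1/y))))
        (fun _ => (0:ℝ)) (Set.uIcc (0:ℝ) (1/2)) := by
      intro y hy
      rw [Set.uIcc_of_le (by norm_num)] at hy
      have h1 : 0 ≤ γ (x * y) := hγxy_nonneg y hy.1 (by linarith [hy.2])
      have h2 : γ (x * y) ≤ γ x := hγxy_le y hy.1 (by linarith [hy.2])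
      have : γ (x * y) = 0 := le_antisymm (h2.trans hzero.ge) h1
      simp [this]
    rw [intervalIntegral.integral_congr hfz, intervalIntegral.integral_const, smul_zero,
      ← hzero, Real.zero_rpow (by linarith : (1:ℝ) - ε ≠ 0), mul_zero]
  · -- main case γ x > 0
    set t : ℝ := γ x with htdef
    set u : ℝ := t ^ (-ε) with hudef
    have hkey := hkeyt t hγx_pos hγx_le_t₀
    have hu_u₁ : u₁ ≤ u := hkey.1
    have hu_log2 : Real.log 2 ≤ u := hkey.2
    have hupos : 0 < u := lt_of_lt_of_le hlog2 hu_log2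
    set δ : ℝ := Real.exp (-u) with hδdef
    have hδpos : 0 < δ := Real.exp_pos _
    have hδhalf : δ ≤ 1/2 := by
      have : δ ≤ Real.exp (-Real.log 2) := Real.exp_le_exp.mpr (by linarith)
      rwa [Real.exp_neg, Real.exp_log two_pos, show ((2:ℝ))⁻¹ = 1/2 by norm_num] at this
    set f : ℝ → ℝ := fun y => γ (x * y) / (y * Real.sqrt (Real.log (1/y))) with hfdef
    show (∫ y in (0:ℝ)..(1/2), f y) ≤ (Real.sqrt (Real.log 2))⁻¹ * (α⁻¹ + 1) * t ^ (1 - ε)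
    -- key: exp bound  δ^α ≤ t^(1-ε)
    have hδα : δ ^ α ≤ t ^ (1 - ε) := by
      have h2 : u ^ ((1 - ε)/ε) ≤ Real.exp (α * u) := hexp u hu_u₁
      have h3 : u ^ ((1 - ε)/ε) = t ^ (-(1 - ε)) := by
        rw [hudef, ← Real.rpow_mul hγx_pos.le]
        congr 1
        field_simp
      have h4 : t ^ (-(1 - ε)) ≤ Real.exp (α * u) := h3 ▸ h2
      have h5 : (Real.exp (α * u))⁻¹ ≤ (t ^ (-(1 - ε)))⁻¹ :=
        inv_anti₀ (Real.rpow_pos_of_pos hγx_pos _) h4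
      have h6 : δ ^ α = (Real.exp (α * u))⁻¹ := by
        rw [hδdef, Real.rpow_def_of_pos (Real.exp_pos _), Real.log_exp, ← Real.exp_neg]
        ring_nf
      rw [h6]
      rwa [Real.rpow_neg hγx_pos.le, inv_inv] at h5
    by_cases hint : IntervalIntegrable f volume 0 (1/2)
    · -- split the integral at δ
      have hsub1 : Set.uIcc (0:ℝ) δ ⊆ Set.uIcc (0:ℝ) (1/2) := by
        rw [Set.uIcc_of_le hδpos.le, Set.uIcc_of_le (by norm_num : (0:ℝ) ≤ 1/2)]
        exact Set.Icc_subset_Icc le_rfl hδhalf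
      have hsub2 : Set.uIcc δ (1/2) ⊆ Set.uIcc (0:ℝ) (1/2) := by
        rw [Set.uIcc_of_le hδhalf, Set.uIcc_of_le (by norm_num : (0:ℝ) ≤ 1/2)]
        exact Set.Icc_subset_Icc hδpos.le le_rfl
      have hintA : IntervalIntegrable f volume 0 δ := hint.mono_set hsub1
      have hintB : IntervalIntegrable f volume δ (1/2) := hint.mono_set hsub2
      have hsplit : (∫ y in (0:ℝ)..(1/2), f y)
          = (∫ y in (0:ℝ)..δ, f y) + ∫ y in δ..(1/2), f y :=
        (intervalIntegral.integral_add_adjacent_intervals hintA hintB).symm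
      -- Bound on [δ, 1/2]
      have hB : (∫ y in δ..(1/2), f y) ≤ t * (Real.sqrt (Real.log 2))⁻¹ * u := by
        have hgint : IntervalIntegrable (fun y => t / Real.sqrt (Real.log 2) * y⁻¹)
            volume δ (1/2) := by
          apply ContinuousOn.intervalIntegrable
          apply ContinuousOn.mul continuousOn_const
          apply ContinuousOn.inv₀ continuousOn_id
          intro y hy
          rw [Set.uIcc_of_le hδhalf] at hy
          exact ne_of_gt (lt_of_lt_of_le hδpos hy.1)
        have hmono2 : (∫ y in δ..(1/2), f y)
            ≤ ∫ y in δ..(1/2), t / Real.sqrt (Real.log 2) * y⁻¹ := by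
          apply intervalIntegral.integral_mono_on hδhalf hintB hgint
          intro y hy
          obtain ⟨hyδ, hy2⟩ := hy
          have hy0 : 0 < y := lt_of_lt_of_le hδpos hyδ
          have hlogy : Real.log 2 ≤ Real.log (1/y) := hlogkey y hy0 hy2
          have hden2 : 0 < y * Real.sqrt (Real.log 2) := mul_pos hy0 hsq2
          have hdenle : y * Real.sqrt (Real.log 2) ≤ y * Real.sqrt (Real.log (1/y)) :=
            mul_le_mul_of_nonneg_left (Real.sqrt_le_sqrt hlogy) hy0.le
          have hnum : γ (x * y) ≤ t := hγxy_le y hy0.le (by linarith)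
          calc f y ≤ t / (y * Real.sqrt (Real.log 2)) :=
                div_le_div₀ hγx_nonneg hnum hden2 hdenle
            _ = t / Real.sqrt (Real.log 2) * y⁻¹ := by
                rw [div_mul_eq_div_div]
                ring
        have hcalc : (∫ y in δ..(1/2), t / Real.sqrt (Real.log 2) * y⁻¹)
            = t / Real.sqrt (Real.log 2) * (Real.log ((1/2)/δ)) := by
          rw [intervalIntegral.integral_const_mul,
            integral_inv_of_pos hδpos (by norm_num : (0:ℝ) < 1/2)]
        have hlogval : Real.log ((1/2)/δ) ≤ u := by
          rw [Real.log_div (by norm_num) (ne_of_gt hδpos), hδdef, Real.log_exp,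
            show (1:ℝ)/2 = 2⁻¹ by norm_num, Real.log_inv]
          linarith
        calc (∫ y in δ..(1/2), f y) ≤ t / Real.sqrt (Real.log 2) * (Real.log ((1/2)/δ)) := by
              rw [← hcalc]; exact hmono2
          _ ≤ t / Real.sqrt (Real.log 2) * u := by
              apply mul_le_mul_of_nonneg_left hlogval
              positivity
          _ = t * (Real.sqrt (Real.log 2))⁻¹ * u := by rw [div_eq_mul_inv]
      -- Bound on [0, δ]
      have hA : (∫ y in (0:ℝ)..δ, f y)
          ≤ δ ^ α / α * (Real.sqrt (Real.log 2))⁻¹ := by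
        have hgint : IntervalIntegrable (fun y => y ^ (α - 1) * (Real.sqrt (Real.log 2))⁻¹)
            volume 0 δ :=
          (intervalIntegral.intervalIntegrable_rpow' (by linarith)).mul_const _
        have hmono2 : (∫ y in (0:ℝ)..δ, f y)
            ≤ ∫ y in (0:ℝ)..δ, y ^ (α - 1) * (Real.sqrt (Real.log 2))⁻¹ := by
          apply intervalIntegral.integral_mono_on hδpos.le hintA hgint
          intro y hy
          obtain ⟨hy0, hyδ⟩ := hy
          rcases eq_or_lt_of_le hy0 with h0 | hy0'
          · rw [← h0]
            have : f 0 = 0 := by simp [hfdef, hγ0]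
            rw [this]
            positivity
          · have hy1 : y ≤ 1 := by linarith [hyδ.trans hδhalf]
            have hxy0 : 0 < x * y := mul_pos hx0 hy0'
            have hxyx₁ : x * y ≤ x₁ :=
              (mul_le_of_le_one_right hx0.le hy1).trans hxx₁
            have hγxy : γ (x * y) ≤ (x * y) ^ α := hx₁ _ ⟨hxy0, hxyx₁⟩
            have hlogy : Real.log 2 ≤ Real.log (1/y) :=
              hlogkey y hy0' (hyδ.trans hδhalf)
            have hden2 : 0 < y * Real.sqrt (Real.log 2) := mul_pos hy0' hsq2
            have hdenle : y * Real.sqrt (Real.log 2) ≤ y * Real.sqrt (Real.log (1/y)) :=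
              mul_le_mul_of_nonneg_left (Real.sqrt_le_sqrt hlogy) hy0'.le
            have hxα : x ^ α ≤ 1 :=
              Real.rpow_le_one hx0.le (by linarith) hα.le
            calc f y ≤ (x * y) ^ α / (y * Real.sqrt (Real.log 2)) :=
                  div_le_div₀ (Real.rpow_nonneg hxy0.le _) hγxy hden2 hdenle
              _ = x ^ α * y ^ α / (y * Real.sqrt (Real.log 2)) := by
                  rw [Real.mul_rpow hx0.le hy0'.le]
              _ ≤ 1 * y ^ α / (y * Real.sqrt (Real.log 2)) := by
                  exact div_le_div₀ (by positivity)
                    (mul_le_mul_of_nonneg_right hxα (Real.rpow_nonneg hy0'.le _))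
                    hden2 le_rfl
              _ = y ^ (α - 1) * (Real.sqrt (Real.log 2))⁻¹ := by
                  rw [one_mul, Real.rpow_sub hy0', Real.rpow_one, div_mul_eq_div_div,
                    div_eq_mul_inv]
        have hcalc : (∫ y in (0:ℝ)..δ, y ^ (α - 1) * (Real.sqrt (Real.log 2))⁻¹)
            = δ ^ α / α * (Real.sqrt (Real.log 2))⁻¹ := by
          rw [intervalIntegral.integral_mul_const,
            integral_rpow (Or.inl (by linarith : (-1:ℝ) < α - 1))]
          rw [show α - 1 + 1 = α by ring, Real.zero_rpow (ne_of_gt hα)]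
          ring
        rw [← hcalc]; exact hmono2
      -- combine
      have htu : t * u = t ^ (1 - ε) := by
        rw [hudef]
        nth_rewrite 1 [← Real.rpow_one t]
        rw [← Real.rpow_add hγx_pos]
        congr 1
      rw [hsplit]
      calc (∫ y in (0:ℝ)..δ, f y) + ∫ y in δ..(1/2), f y
          ≤ δ ^ α / α * (Real.sqrt (Real.log 2))⁻¹
            + t * (Real.sqrt (Real.log 2))⁻¹ * u := add_le_add hA hB
        _ ≤ t ^ (1 - ε) / α * (Real.sqrt (Real.log 2))⁻¹
            + t * (Real.sqrt (Real.log 2))⁻¹ * u := by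
            gcongr
        _ = (Real.sqrt (Real.log 2))⁻¹ * (α⁻¹ + 1) * t ^ (1 - ε) := by
            rw [← htu]; ring
    · rw [intervalIntegral.integral_undef hint]
      positivity
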